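/- Let F = ⟨a, b⟩ be the free group of rank 2 and let φ : F → F be the automorphism determined by a ↦ b and b ↦ ab². Then the set of nonzero eigenvalues of φ is Λ(φ) = {1 + √2, 1 − √2}, and for every finite-index subgroup H of F with φ(H) ⊆ H, both 1 + √2 and 1 − √2 are eigenvalues of the restriction φ|_H. -/

import Mathlib

open scoped TensorProduct

/-- The complex linear endomorphism of `(G/[G,G]) ⊗_ℤ ℂ` induced by a group
endomorphism `φ : G →* G`. -/
noncomputable def inducedEnd {G : Type*} [Group G] (φ : G →* G) :
    Module.End ℂ (ℂ ⊗[ℤ] Additive (Abelianization G)) :=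
  ((MonoidHom.toAdditive (Abelianization.map φ)).toIntLinearMap).baseChange ℂ

/-- `Λ(φ)`: the set of nonzero eigenvalues of the induced map on
`(G/[G,G]) ⊗_ℤ ℂ`. -/
noncomputable def specNZ {G : Type*} [Group G] (φ : G →* G) : Set ℂ :=
  {μ : ℂ | μ ≠ 0 ∧ Module.End.HasEigenvalue (inducedEnd φ) μ}

/-- The restriction of an endomorphism `φ` to a `φ`-invariant subgroup `H`,
as an endomorphism of `H`. -/
def restrictHom {G : Type*} [Group G] (φ : G →* G) (H : Subgroup G)
    (hinv : ∀ x ∈ H, φ x ∈ H) : H →* H :=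
  (φ.comp H.subtype).codRestrict H fun x => hinv x x.2

/-- The endomorphism of the free group on two generators `a = of false`,
`b = of true` determined by `a ↦ b` and `b ↦ a b²`. -/
def cassonAut : FreeGroup Bool →* FreeGroup Bool :=
  FreeGroup.lift fun i =>
    if i then FreeGroup.of false * FreeGroup.of true ^ 2 else FreeGroup.of true

namespace CassonAux

variable {G : Type*} [Group G] {G' : Type*} [Group G'] {G'' : Type*} [Group G'']

noncomputable def aof (g : G) : Additive (Abelianization G) :=
  Additive.ofMul (Abelianization.of g)

noncomputable def abLin (ρ : G →* G') :
    Additive (Abelianization G) →ₗ[ℤ] Additive (Abelianization G') :=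
  (MonoidHom.toAdditive (Abelianization.map ρ)).toIntLinearMap

lemma abLin_aof (ρ : G →* G') (g : G) : abLin ρ (aof g) = aof (ρ g) := rfl

lemma exists_aof (x : Additive (Abelianization G)) : ∃ g : G, aof g = x :=
  QuotientGroup.induction_on (C := fun y => ∃ g : G, aof g = Additive.ofMul y)
    (Additive.toMul x) (fun g => ⟨g, rfl⟩)

lemma inducedEnd_eq (φ : G →* G) : inducedEnd φ = (abLin φ).baseChange ℂ := rfl

lemma abLin_comp (ρ₂ : G' →* G'') (ρ₁ : G →* G') :
    abLin (ρ₂.comp ρ₁) = (abLin ρ₂).comp (abLin ρ₁) := by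
  ext x
  obtain ⟨g, rfl⟩ := exists_aof x
  rfl

end CassonAux

namespace CassonAux

lemma casson_mul_rel (g : FreeGroup Bool) :
    Abelianization.of (cassonAut (cassonAut g))
      = Abelianization.of (cassonAut g) * Abelianization.of (cassonAut g)
        * Abelianization.of g := by
  have h : ((Abelianization.of.comp (cassonAut.comp cassonAut)) :
        FreeGroup Bool →* Abelianization (FreeGroup Bool))
      = (Abelianization.of.comp cassonAut) * (Abelianization.of.comp cassonAut)
        * Abelianization.of := by
    apply FreeGroup.ext_hom
    intro a
    cases a <;>
      simp [cassonAut, MonoidHom.mul_apply, FreeGroup.lift_apply_of, map_mul, map_pow, pow_two,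
        mul_comm, mul_left_comm, mul_assoc]
  exact DFunLike.congr_fun h g

lemma casson_rel :
    (abLin cassonAut) ∘ₗ (abLin cassonAut)
      = abLin cassonAut + abLin cassonAut + LinearMap.id := by
  ext x
  obtain ⟨g, rfl⟩ := exists_aof x
  show aof (cassonAut (cassonAut g))
    = aof (cassonAut g) + aof (cassonAut g) + aof g
  exact congrArg Additive.ofMul (casson_mul_rel g)

lemma casson_end_rel :
    (inducedEnd cassonAut) ∘ₗ (inducedEnd cassonAut)
      = inducedEnd cassonAut + inducedEnd cassonAut + LinearMap.id := by
  rw [inducedEnd_eq, ← LinearMap.baseChange_comp, casson_rel]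
  simp [LinearMap.baseChange_add, LinearMap.baseChange_id]

end CassonAux

namespace CassonAux

noncomputable def Bc : Module.Basis Bool ℂ (ℂ ⊗[ℤ] Additive (Abelianization (FreeGroup Bool))) :=
  (FreeAbelianGroup.basis Bool).baseChange ℂ

lemma basis_repr_of (i j : Bool) :
    (FreeAbelianGroup.basis Bool).repr (FreeAbelianGroup.of i) j
      = if i = j then 1 else 0 := by
  simp [FreeAbelianGroup.basis, FreeAbelianGroup.toFinsupp_of, Finsupp.single_apply]

lemma bc_repr (i j : Bool) :
    Bc.repr ((1 : ℂ) ⊗ₜ aof (FreeGroup.of i)) j = if i = j then 1 else 0 := by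
  have h := Module.Basis.baseChange_repr_tmul (S := ℂ) (FreeAbelianGroup.basis Bool) (1 : ℂ)
    (FreeAbelianGroup.of i) j
  rw [basis_repr_of] at h
  refine h.trans ?_
  split <;> simp

lemma inducedEnd_tmul (φ : FreeGroup Bool →* FreeGroup Bool) (c : ℂ) (g : FreeGroup Bool) :
    inducedEnd φ (c ⊗ₜ aof g) = c ⊗ₜ aof (φ g) := by
  rw [inducedEnd_eq, LinearMap.baseChange_tmul, abLin_aof]

lemma aof_mul {G : Type*} [Group G] (g h : G) : aof (g * h) = aof g + aof h := rfl

lemma eigen_of_quad {μ : ℂ} (hμ : μ ^ 2 = 2 * μ + 1) :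
    Module.End.HasEigenvalue (inducedEnd cassonAut) μ := by
  set ea : ℂ ⊗[ℤ] Additive (Abelianization (FreeGroup Bool)) :=
    (1 : ℂ) ⊗ₜ aof (FreeGroup.of false) with hea
  set eb : ℂ ⊗[ℤ] Additive (Abelianization (FreeGroup Bool)) :=
    (1 : ℂ) ⊗ₜ aof (FreeGroup.of true) with heb
  set v := ea + μ • eb with hv
  have hca : cassonAut (FreeGroup.of false) = FreeGroup.of true := by
    simp [cassonAut]
  have hcb : cassonAut (FreeGroup.of true)
      = FreeGroup.of false * (FreeGroup.of true * FreeGroup.of true) := by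
    simp [cassonAut, pow_two, mul_assoc]
  have hfa : inducedEnd cassonAut ea = eb := by
    rw [hea, inducedEnd_tmul, hca]
  have hfb : inducedEnd cassonAut eb = ea + (eb + eb) := by
    rw [heb, inducedEnd_tmul, hcb, aof_mul, aof_mul, TensorProduct.tmul_add,
      TensorProduct.tmul_add]
  have hfv : inducedEnd cassonAut v = μ • v := by
    rw [hv, map_add, map_smul, hfa, hfb]
    have hμ' : μ * μ = 2 * μ + 1 := by rw [← pow_two]; exact hμ
    have hrhs : μ • (ea + μ • eb) = μ • ea + (μ * μ) • eb := by
      rw [smul_add, smul_smul]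
    rw [hrhs, hμ']
    module
  have hvne : v ≠ 0 := by
    intro h
    have h2 := congrArg (fun w => Bc.repr w false) h
    simp only [hv, hea, heb, map_add, map_smul, Finsupp.add_apply, Finsupp.smul_apply,
      map_zero, Finsupp.coe_zero, Pi.zero_apply] at h2
    rw [bc_repr, bc_repr] at h2
    norm_num at h2
  exact Module.End.hasEigenvalue_of_hasEigenvector
    ⟨Module.End.mem_eigenspace_iff.mpr hfv, hvne⟩

lemma quad_of_eigen {μ : ℂ}
    (he : Module.End.HasEigenvalue (inducedEnd cassonAut) μ) : μ ^ 2 = 2 * μ + 1 := by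
  obtain ⟨v, hv⟩ := he.exists_hasEigenvector
  have h1 : inducedEnd cassonAut v = μ • v := hv.apply_eq_smul
  have h2 := DFunLike.congr_fun casson_end_rel v
  simp only [LinearMap.comp_apply, LinearMap.add_apply, LinearMap.id_apply, h1, map_smul] at h2
  rw [smul_smul] at h2
  have h3 : (μ * μ) • v = (2 * μ + 1) • v := by
    rw [h2]; module
  have h4 : (μ * μ - (2 * μ + 1)) • v = 0 := by
    rw [sub_smul, h3, sub_self]
  rcases smul_eq_zero.mp h4 with h | h
  · rw [pow_two]; linear_combination h
  · exact absurd h hv.right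

end CassonAux

namespace CassonAux

instance : Group.FG (FreeGroup Bool) :=
  ⟨(Subgroup.fg_iff ⊤).mpr
    ⟨Set.range FreeGroup.of, FreeGroup.closure_range_of Bool, Set.finite_range _⟩⟩

lemma of_surjective {G : Type*} [Group G] :
    Function.Surjective (Abelianization.of : G →* Abelianization G) := fun x =>
  QuotientGroup.induction_on (C := fun y => ∃ g : G, Abelianization.of g = y)
    x (fun g => ⟨g, rfl⟩)

lemma restr_eigen (H : Subgroup (FreeGroup Bool)) (hfi : H.FiniteIndex)
    (hinv : ∀ x ∈ H, cassonAut x ∈ H) {μ : ℂ}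
    (he : Module.End.HasEigenvalue (inducedEnd cassonAut) μ) :
    Module.End.HasEigenvalue (inducedEnd (restrictHom cassonAut H hinv)) μ := by
  haveI := hfi
  haveI : Group.FG H := inferInstance
  haveI : Group.FG (Abelianization H) := Group.fg_of_surjective of_surjective
  haveI : Module.Finite ℤ (Additive (Abelianization H)) :=
    Module.Finite.iff_addGroup_fg.mpr inferInstance
  haveI : Module.Finite ℂ (ℂ ⊗[ℤ] Additive (Abelianization H)) := inferInstance
  set φH := restrictHom cassonAut H hinv with hφH
  set π := (abLin H.subtype).baseChange ℂ with hπ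
  -- equivariance
  have hcomm : H.subtype.comp φH = cassonAut.comp H.subtype := by
    ext x; rfl
  have hπcomm : π ∘ₗ (inducedEnd φH) = (inducedEnd cassonAut) ∘ₗ π := by
    rw [inducedEnd_eq, inducedEnd_eq, hπ, ← LinearMap.baseChange_comp,
      ← LinearMap.baseChange_comp, ← abLin_comp, ← abLin_comp, hcomm]
  have hπcomm' : ∀ x, π (inducedEnd φH x) = inducedEnd cassonAut (π x) :=
    fun x => DFunLike.congr_fun hπcomm x
  -- surjectivity of π
  have hπtmul : ∀ (c : ℂ) (h : H), π (c ⊗ₜ aof h) = c ⊗ₜ aof (h : FreeGroup Bool) := by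
    intro c h
    rw [hπ, LinearMap.baseChange_tmul, abLin_aof]
    rfl
  have hsurj : Function.Surjective π := by
    have hmem : ∀ z, z ∈ LinearMap.range π := by
      intro z
      induction z using TensorProduct.induction_on with
      | zero => exact zero_mem _
      | add x y hx hy => exact add_mem hx hy
      | tmul c m =>
        obtain ⟨g, rfl⟩ := exists_aof m
        obtain ⟨n, hn0, -, hgn⟩ :=
          Subgroup.exists_pow_mem_of_index_ne_zero hfi.index_ne_zero g
        have h1 : π (c ⊗ₜ aof (⟨g ^ n, hgn⟩ : H)) = (n : ℂ) • (c ⊗ₜ aof g) := by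
          rw [hπtmul]
          have : aof ((⟨g ^ n, hgn⟩ : H) : FreeGroup Bool) = n • aof g := by
            show Additive.ofMul (Abelianization.of (g ^ n)) = _
            rw [map_pow, ofMul_pow]
            rfl
          rw [this, TensorProduct.tmul_smul, Nat.cast_smul_eq_nsmul]
        have h2 : c ⊗ₜ[ℤ] aof g = π ((n : ℂ)⁻¹ • (c ⊗ₜ aof (⟨g ^ n, hgn⟩ : H))) := by
          rw [map_smul, h1, smul_smul,
            inv_mul_cancel₀ (by exact_mod_cast hn0.ne'), one_smul]
        rw [h2]
        exact LinearMap.mem_range_self _ _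
    intro z
    exact hmem z
  -- main argument
  by_contra hne
  have hbot : (inducedEnd φH).eigenspace μ = ⊥ := by
    by_contra hb; exact hne hb
  set g : Module.End ℂ (ℂ ⊗[ℤ] Additive (Abelianization H)) :=
    inducedEnd φH - μ • 1 with hg
  have hginj : Function.Injective g := by
    rw [← LinearMap.ker_eq_bot, ← Module.End.eigenspace_def]
    exact hbot
  have hgapp : ∀ x, g x = inducedEnd φH x - μ • x := by
    intro x
    rw [hg, LinearMap.sub_apply, LinearMap.smul_apply, Module.End.one_apply]
  set K := LinearMap.ker π with hK
  have hKinv : ∀ x ∈ K, g x ∈ K := by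
    intro x hx
    rw [LinearMap.mem_ker] at hx ⊢
    rw [hgapp, map_sub, map_smul, hπcomm', hx, map_zero, smul_zero, sub_zero]
  set g' : K →ₗ[ℂ] K := g.restrict hKinv with hg'
  have hg'inj : Function.Injective g' := by
    intro x y hxy
    have h1 : g (x : ℂ ⊗[ℤ] Additive (Abelianization H)) = g y := by
      have h2 := congrArg (Subtype.val) hxy
      rwa [hg', LinearMap.restrict_coe_apply, LinearMap.restrict_coe_apply] at h2
    exact Subtype.ext (hginj h1)
  have hg'surj : Function.Surjective g' := (LinearMap.injective_iff_surjective).mp hg'inj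
  obtain ⟨w, hw⟩ := he.exists_hasEigenvector
  obtain ⟨v, hv⟩ := hsurj w
  have hgvK : g v ∈ K := by
    rw [hK, LinearMap.mem_ker, hgapp, map_sub, map_smul, hπcomm', hv,
      hw.apply_eq_smul, sub_self]
  obtain ⟨k, hk⟩ := hg'surj ⟨g v, hgvK⟩
  have hkv : g (k : ℂ ⊗[ℤ] Additive (Abelianization H)) = g v := by
    have h2 := congrArg (Subtype.val) hk
    rwa [hg', LinearMap.restrict_coe_apply] at h2
  have : v ∈ K := by
    rw [← hginj hkv]; exact k.2
  rw [hK, LinearMap.mem_ker] at this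
  rw [this] at hv
  exact hw.right hv.symm

end CassonAux

namespace CassonAux

lemma sqrt2_sq : ((Real.sqrt 2 : ℝ) : ℂ) ^ 2 = 2 := by
  rw [← Complex.ofReal_pow, Real.sq_sqrt (by norm_num : (2:ℝ) ≥ 0)]
  norm_num

lemma quad1 : (((1 + Real.sqrt 2 : ℝ) : ℂ)) ^ 2 = 2 * ((1 + Real.sqrt 2 : ℝ) : ℂ) + 1 := by
  push_cast
  linear_combination sqrt2_sq

lemma quad2 : (((1 - Real.sqrt 2 : ℝ) : ℂ)) ^ 2 = 2 * ((1 - Real.sqrt 2 : ℝ) : ℂ) + 1 := by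
  push_cast
  linear_combination sqrt2_sq

lemma ne1 : (((1 + Real.sqrt 2 : ℝ) : ℂ)) ≠ 0 := by
  rw [Complex.ofReal_ne_zero]
  nlinarith [Real.sqrt_nonneg 2]

lemma ne2 : (((1 - Real.sqrt 2 : ℝ) : ℂ)) ≠ 0 := by
  rw [Complex.ofReal_ne_zero]
  have h := Real.sq_sqrt (by norm_num : (2:ℝ) ≥ 0)
  intro hc
  nlinarith

end CassonAux


open CassonAux in
theorem casson_example :
    specNZ cassonAut =
      {((1 + Real.sqrt 2 : ℝ) : ℂ), ((1 - Real.sqrt 2 : ℝ) : ℂ)} ∧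
    ∀ H : Subgroup (FreeGroup Bool), H.FiniteIndex →
      ∀ hinv : ∀ x ∈ H, cassonAut x ∈ H,
        Module.End.HasEigenvalue (inducedEnd (restrictHom cassonAut H hinv))
          ((1 + Real.sqrt 2 : ℝ) : ℂ) ∧
        Module.End.HasEigenvalue (inducedEnd (restrictHom cassonAut H hinv))
          ((1 - Real.sqrt 2 : ℝ) : ℂ) := by
  constructor
  · ext μ
    simp only [specNZ, Set.mem_setOf_eq, Set.mem_insert_iff, Set.mem_singleton_iff]
    constructor
    · rintro ⟨hne, he⟩
      have hq := quad_of_eigen he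
      have hfac : (μ - ((1 + Real.sqrt 2 : ℝ) : ℂ)) * (μ - ((1 - Real.sqrt 2 : ℝ) : ℂ)) = 0 := by
        push_cast
        linear_combination hq - sqrt2_sq
      rcases mul_eq_zero.mp hfac with h | h
      · exact Or.inl (sub_eq_zero.mp h)
      · exact Or.inr (sub_eq_zero.mp h)
    · rintro (rfl | rfl)
      · exact ⟨ne1, eigen_of_quad quad1⟩
      · exact ⟨ne2, eigen_of_quad quad2⟩
  · intro H hFI hinv
    exact ⟨restr_eigen H hFI hinv (eigen_of_quad quad1),
      restr_eigen H hFI hinv (eigen_of_quad quad2)⟩
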